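/- Let B be a monad on C with Eilenberg–Moore adjunction F ⊣ U, unit η, counit ε̃, and induced comonad B̃ = FU on C^B with comultiplication Δ̃ = FηU and counit ε̃. For an endofunctor Σ on C^B, the adjunction bijection between natural transformations σ : B̃Σ ⟶ ΣB̃ and natural transformations ∇ : UΣ ⟶ UΣB̃ identifies distributive laws σ : B̃ ⟶ Σ (between the comonad B̃ and Σ) exactly with those ∇ satisfying ∇B̃ ∘ ∇ = UΣΔ̃ ∘ ∇ and UΣε̃ ∘ ∇ = id. -/

import Mathlib

open CategoryTheory

universe v u

namespace BohmStefan

variable {C : Type u} [Category.{v} C]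

/-- A distributive law `σ : B̃Σ ⟶ ΣB̃` between a comonad `B̃` and an endofunctor `S`. -/
def IsComonadEndoLaw {A : Type*} [Category A] (Tm : Comonad A) (S : A ⥤ A)
    (σ : S ⋙ (Tm : A ⥤ A) ⟶ (Tm : A ⥤ A) ⋙ S) : Prop :=
  (∀ X, σ.app X ≫ S.map (Tm.δ.app X) =
      Tm.δ.app (S.obj X) ≫ (Tm : A ⥤ A).map (σ.app X) ≫ σ.app (Tm.obj X)) ∧
  (∀ X, σ.app X ≫ S.map (Tm.ε.app X) = Tm.ε.app (S.obj X))

variable (B : Monad C)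

/-- The comonad `B̃ = FU` on the Eilenberg–Moore category induced by the free–forgetful
adjunction `F ⊣ U` of the monad `B`. -/
noncomputable abbrev tildeB : Comonad B.Algebra := B.adj.toComonad

/-- The natural transformation `∇ : UΣ ⟶ UΣB̃` corresponding to `σ : B̃Σ ⟶ ΣB̃` under
the adjunction bijection `Hom(B̃Σ(X,α), ΣB̃(X,α)) ≅ Hom(UΣ(X,α), UΣB̃(X,α))`,
i.e. `∇_a = η_{UΣa} ≫ U(σ_a)`. -/
noncomputable def nabla (S : B.Algebra ⥤ B.Algebra)
    (σ : S ⋙ (tildeB B : B.Algebra ⥤ B.Algebra) ⟶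
      (tildeB B : B.Algebra ⥤ B.Algebra) ⋙ S) (a : B.Algebra) :
    B.forget.obj (S.obj a) ⟶ B.forget.obj (S.obj ((tildeB B).obj a)) :=
  B.adj.unit.app (B.forget.obj (S.obj a)) ≫ B.forget.map (σ.app a)

/-- Morphisms out of a free algebra are determined by their restriction along the unit. -/
lemma free_hom_ext {X : C} {Y : B.Algebra} (f g : B.free.obj X ⟶ Y)
    (h : B.η.app X ≫ f.f = B.η.app X ≫ g.f) : f = g := by
  have := congrArg (B.adj.homEquiv X Y).symm
    (show (B.adj.homEquiv X Y) f = (B.adj.homEquiv X Y) g by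
      simp only [Adjunction.homEquiv_unit, Monad.adj_unit]
      exact h)
  simpa using this

lemma nabla_eq (S : B.Algebra ⥤ B.Algebra)
    (σ : S ⋙ (tildeB B : B.Algebra ⥤ B.Algebra) ⟶
      (tildeB B : B.Algebra ⥤ B.Algebra) ⋙ S) (a : B.Algebra) :
    nabla B S σ a = B.η.app (S.obj a).A ≫ (σ.app a).f := by
  simp [nabla, Monad.adj_unit]
  rfl

lemma delta_f (a : B.Algebra) :
    ((tildeB B).δ.app a).f = B.map (B.η.app a.A) := by
  simp [Adjunction.toComonad]
  rfl

lemma eps_f (a : B.Algebra) :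
    ((tildeB B).ε.app a).f = a.a := by
  simp [Adjunction.toComonad, Monad.adj_counit]
  rfl

lemma eta_nat {X Y : C} (f : X ⟶ Y) {Z : C} (h : (B : C ⥤ C).obj Y ⟶ Z) :
    B.η.app X ≫ (B : C ⥤ C).map f ≫ h = f ≫ B.η.app Y ≫ h := by
  rw [← Category.assoc, ← Category.assoc]
  congr 1
  exact (B.η.naturality f).symm

/-- under the adjunction bijection between natural transformations
`σ : B̃Σ ⟶ ΣB̃` and `∇ : UΣ ⟶ UΣB̃`, the distributive laws `σ` between the comonad
`B̃` and `Σ` correspond exactly to those `∇` satisfying `∇B̃ ∘ ∇ = UΣΔ̃ ∘ ∇` and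
`UΣε̃ ∘ ∇ = id`. -/
theorem distLaw_iff_flat (S : B.Algebra ⥤ B.Algebra)
    (σ : S ⋙ (tildeB B : B.Algebra ⥤ B.Algebra) ⟶
      (tildeB B : B.Algebra ⥤ B.Algebra) ⋙ S) :
    IsComonadEndoLaw (tildeB B) S σ ↔
    ((∀ a : B.Algebra,
        nabla B S σ a ≫ nabla B S σ ((tildeB B).obj a) =
          nabla B S σ a ≫ B.forget.map (S.map ((tildeB B).δ.app a))) ∧
      (∀ a : B.Algebra,
        nabla B S σ a ≫ B.forget.map (S.map ((tildeB B).ε.app a)) =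
          𝟙 (B.forget.obj (S.obj a)))) := by
  -- the key computation: the restriction along the unit of the right-hand side of the
  -- comultiplication compatibility law equals `∇ a ≫ ∇ (B̃ a)`.
  have key : ∀ a : B.Algebra,
      B.η.app (S.obj a).A ≫
        ((tildeB B).δ.app (S.obj a) ≫ ((tildeB B) : B.Algebra ⥤ B.Algebra).map (σ.app a) ≫
          σ.app ((tildeB B).obj a)).f =
      nabla B S σ a ≫ nabla B S σ ((tildeB B).obj a) := by
    intro a
    simp only [Monad.Algebra.comp_f, delta_f, nabla_eq]
    have h1 : (((tildeB B) : B.Algebra ⥤ B.Algebra).map (σ.app a)).f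
        = B.map (σ.app a).f := rfl
    rw [h1]
    exact (congrArg (B.η.app (S.obj a).A ≫ ·)
      (Functor.map_comp_assoc (B : C ⥤ C) (B.η.app (S.obj a).A) (σ.app a).f
        (σ.app ((tildeB B).obj a)).f).symm).trans
      ((Category.assoc _ _ _).symm.trans
        ((congrArg (· ≫ (σ.app ((tildeB B).obj a)).f)
          (B.η.naturality (B.η.app (S.obj a).A ≫ (σ.app a).f)).symm).trans
          (Category.assoc _ _ _)))
  constructor
  · rintro ⟨h1, h2⟩
    refine ⟨fun a => ?_, fun a => ?_⟩
    · have := congrArg Monad.Algebra.Hom.f (h1 a)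
      rw [show nabla B S σ a ≫ B.forget.map (S.map ((tildeB B).δ.app a))
          = B.η.app (S.obj a).A ≫ (σ.app a ≫ S.map ((tildeB B).δ.app a)).f by
            simp [nabla_eq]; exact Category.assoc _ _ _, this, key a]
    · have := congrArg Monad.Algebra.Hom.f (h2 a)
      rw [show nabla B S σ a ≫ B.forget.map (S.map ((tildeB B).ε.app a))
          = B.η.app (S.obj a).A ≫ (σ.app a ≫ S.map ((tildeB B).ε.app a)).f by
            simp [nabla_eq]; exact Category.assoc _ _ _, this, eps_f]
      exact (S.obj a).unit
  · rintro ⟨h1, h2⟩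
    refine ⟨fun a => ?_, fun a => ?_⟩
    · apply free_hom_ext
      show B.η.app (S.obj a).A ≫ _ = B.η.app (S.obj a).A ≫ _
      rw [key a, h1 a]
      simp [nabla_eq]
      exact (Category.assoc _ _ _).symm
    · apply free_hom_ext
      show B.η.app (S.obj a).A ≫ _ = B.η.app (S.obj a).A ≫ _
      rw [eps_f]
      have := h2 a
      simp only [nabla_eq] at this
      rw [(S.obj a).unit]
      exact (Category.assoc _ _ _).symm.trans this

end BohmStefan
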